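/- arXiv:2310.20361 — 2 statements merged into one kernel-verified Lean document; each statement's English description precedes it below -/
import Mathlib

section
/- For every real number k ≥ 1 and every real number x, one has k·(exp(x) − 1 − x) ≤ exp(k·x) − 1 − k·x. -/
/-- For every real `k ≥ 1` and every real `x`,
`k·(exp x − 1 − x) ≤ exp (k·x) − 1 − k·x`. -/
theorem stmt_1 (k x : ℝ) (hk : 1 ≤ k) :
    k * (Real.exp x - 1 - x) ≤ Real.exp (k * x) - 1 - k * x := by
  have hs : (-1 : ℝ) ≤ Real.exp x - 1 := by
    have := Real.exp_pos x; linarith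
  have h := one_add_mul_self_le_rpow_one_add hs hk
  rw [show (1 : ℝ) + (Real.exp x - 1) = Real.exp x by ring] at h
  have he : Real.exp (k * x) = Real.exp x ^ k := by
    rw [mul_comm, Real.exp_mul]
  rw [he]
  linarith
end

section
/- Let (E, ℰ, φ) be a probability space, H = L²(φ), λ > 0, α ≥ 0, β ≥ 0, 0 ≤ β̃ ≤ β, C₀ ≥ 0, and let f : ℝ × H → ℝ satisfy: (a) the growth condition −α − β·|y| − λ⁻¹·j_λ(−u) ≤ f(y,u) ≤ α + β·|y| + λ⁻¹·j_λ(u) for all (y,u) ∈ ℝ × H (interpreted in [−∞,∞], trivially true when the j_λ term is infinite); (b) u ↦ f(y,u) is convex on H for each y; (c) |f(y,u) − f(y′,u)| ≤ β̃·|y − y′| for all y, y′, u; (d) f(0,u) − f(0,0) ≥ −C₀·‖u‖_{L²(φ)} for all u ∈ H. Then for every real n > C₀ and all (y,u) ∈ ℝ × H: −3α − 3β·|y| − λ⁻¹·j_λ(−u) ≤ f⁽ⁿ⁾(y,u) ≤ f(y,u) ≤ α + β·|y| + λ⁻¹·j_λ(u). -/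
open MeasureTheory Real
open scoped ENNReal

/-- `j_λ(u) = ∫ (exp (λ·u) − 1 − λ·u) dφ`, a well-defined value in `[0,∞]`. -/
noncomputable def jlam {E : Type*} [MeasurableSpace E] (φ : Measure E) (l : ℝ) (u : E → ℝ) :
    ℝ≥0∞ :=
  ∫⁻ e, ENNReal.ofReal (exp (l * u e) - 1 - l * u e) ∂φ

/-- Growth bounds for the Lipschitz inf-convolution approximations of a convex
quadratic-exponential generator satisfying the uniform linear bound condition (H5):
for `n > C₀`, `−3α − 3β|y| − λ⁻¹ j_λ(−u) ≤ f⁽ⁿ⁾(y,u) ≤ f(y,u) ≤ α + β|y| + λ⁻¹ j_λ(u)`. -/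
theorem stmt_9 {E : Type*} [MeasurableSpace E] (φ : Measure E) [IsProbabilityMeasure φ]
    (l α β betat C₀ : ℝ) (hl : 0 < l) (hα : 0 ≤ α) (hβ : 0 ≤ betat) (hββ : betat ≤ β)
    (hC : 0 ≤ C₀)
    (f : ℝ → Lp ℝ 2 φ → ℝ)
    (hgrow_lb : ∀ (y : ℝ) (u : Lp ℝ 2 φ),
      ((-α - β * |y| : ℝ) : EReal) - ((l⁻¹ : ℝ) : EReal) * (jlam φ l ⇑(-u) : EReal)
        ≤ (f y u : EReal))
    (hgrow_ub : ∀ (y : ℝ) (u : Lp ℝ 2 φ),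
      (f y u : EReal) ≤ ((α + β * |y| : ℝ) : EReal)
        + ((l⁻¹ : ℝ) : EReal) * (jlam φ l ⇑u : EReal))
    (hconv : ∀ y : ℝ, ConvexOn ℝ Set.univ (f y))
    (hlip : ∀ (y y' : ℝ) (u : Lp ℝ 2 φ), |f y u - f y' u| ≤ betat * |y - y'|)
    (hH5 : ∀ u : Lp ℝ 2 φ, -C₀ * ‖u‖ ≤ f 0 u - f 0 0)
    (n : ℝ) (hn : C₀ < n) (y : ℝ) (u : Lp ℝ 2 φ) :
    ((-(3 * α) - 3 * β * |y| : ℝ) : EReal)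
        - ((l⁻¹ : ℝ) : EReal) * (jlam φ l ⇑(-u) : EReal)
        ≤ ((⨅ r : Lp ℝ 2 φ, f y r + n * ‖u - r‖ : ℝ) : EReal) ∧
    (⨅ r : Lp ℝ 2 φ, f y r + n * ‖u - r‖) ≤ f y u ∧
    (f y u : EReal) ≤ ((α + β * |y| : ℝ) : EReal)
        + ((l⁻¹ : ℝ) : EReal) * (jlam φ l ⇑u : EReal) := by

  classical
  haveI : Nonempty (Lp ℝ 2 φ) := ⟨0⟩
  have hβ0 : (0:ℝ) ≤ β := le_trans hβ hββ
  have hn0 : (0:ℝ) ≤ n := le_of_lt (lt_of_le_of_lt hC hn)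
  -- jlam of the zero element is 0
  have hjz : jlam φ l (⇑(0 : Lp ℝ 2 φ)) = 0 := by
    unfold jlam
    rw [← lintegral_zero (μ := φ)]
    refine lintegral_congr_ae ?_
    filter_upwards [Lp.coeFn_zero ℝ 2 φ] with e he
    simp [he]
  have h00 : -α ≤ f 0 0 := by
    have h := hgrow_lb 0 0
    rw [neg_zero, hjz] at h
    simp only [abs_zero, mul_zero, sub_zero, EReal.coe_ennreal_zero] at h
    exact_mod_cast h
  have hfy : ∀ r : Lp ℝ 2 φ, f 0 r - betat * |y| ≤ f y r := by
    intro r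
    have h := hlip y 0 r
    rw [sub_zero] at h
    linarith [(abs_le.1 h).1, (abs_le.1 h).2]
  -- pointwise lower bound for the inf-convolution family centered at any v
  have hptw : ∀ v r : Lp ℝ 2 φ, -α - betat * |y| - C₀ * ‖v‖ ≤ f y r + n * ‖v - r‖ := by
    intro v r
    have h1 := hfy r
    have h2 := hH5 r
    have h3 : ‖r‖ - ‖v‖ ≤ ‖v - r‖ := by
      have h := norm_sub_norm_le r v
      rwa [norm_sub_rev] at h
    have h4 : C₀ * ‖v - r‖ ≤ n * ‖v - r‖ :=
      mul_le_mul_of_nonneg_right hn.le (norm_nonneg _)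
    have h5 : C₀ * ‖r‖ - C₀ * ‖v‖ ≤ C₀ * ‖v - r‖ := by
      rw [← mul_sub]; exact mul_le_mul_of_nonneg_left h3 hC
    linarith
  have hbdd : ∀ v : Lp ℝ 2 φ,
      BddBelow (Set.range fun r : Lp ℝ 2 φ => f y r + n * ‖v - r‖) := by
    intro v
    exact ⟨_, by rintro x ⟨r, rfl⟩; exact hptw v r⟩
  set A : ℝ := ⨅ r : Lp ℝ 2 φ, f y r + n * ‖u - r‖ with hA
  set Z : ℝ := ⨅ r : Lp ℝ 2 φ, f y r + n * ‖(0 : Lp ℝ 2 φ) - r‖ with hZ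
  set M : ℝ := ⨅ r : Lp ℝ 2 φ, f y r + n * ‖(-u) - r‖ with hM
  have hZlb : -α - betat * |y| ≤ Z := by
    refine le_ciInf fun r => ?_
    have h := hptw 0 r
    simpa using h
  have hMle : M ≤ f y (-u) := by
    have h := ciInf_le (hbdd (-u)) (-u)
    simpa using h
  have hAle : A ≤ f y u := by
    have h := ciInf_le (hbdd u) u
    simpa using h
  have h2Z : ∀ r s : Lp ℝ 2 φ,
      2 * Z ≤ (f y r + n * ‖u - r‖) + (f y s + n * ‖(-u) - s‖) := by
    intro r s
    set m : Lp ℝ 2 φ := (1/2 : ℝ) • r + (1/2 : ℝ) • s with hmdef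
    have hZm : Z ≤ f y m + n * ‖(0 : Lp ℝ 2 φ) - m‖ := ciInf_le (hbdd 0) m
    have hcm : f y m ≤ (1/2) * f y r + (1/2) * f y s := by
      have := (hconv y).2 (Set.mem_univ r) (Set.mem_univ s)
        (by norm_num : (0:ℝ) ≤ 1/2) (by norm_num : (0:ℝ) ≤ 1/2) (by norm_num)
      simpa [hmdef, smul_eq_mul] using this
    have hmeq : (0 : Lp ℝ 2 φ) - m
        = ((1/2) : ℝ) • (u - r) + ((1/2) : ℝ) • ((-u) - s) := by
      rw [hmdef]; module
    have hnm : ‖(0 : Lp ℝ 2 φ) - m‖ ≤ 1/2 * ‖u - r‖ + 1/2 * ‖(-u) - s‖ := by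
      rw [hmeq]
      refine (norm_add_le _ _).trans ?_
      rw [norm_smul, norm_smul]
      simp [Real.norm_eq_abs]
    have hmul := mul_le_mul_of_nonneg_left hnm hn0
    linarith
  have hAM : 2 * Z - M ≤ A := by
    refine le_ciInf fun r => ?_
    have hMr : 2 * Z - (f y r + n * ‖u - r‖) ≤ M := by
      refine le_ciInf fun s => ?_
      linarith [h2Z r s]
    linarith
  refine ⟨?_, hAle, hgrow_ub y u⟩
  rcases eq_or_ne (jlam φ l ⇑(-u)) ⊤ with hJ | hJ
  · rw [hJ]
    have htop : ((l⁻¹ : ℝ) : EReal) * ((⊤ : ℝ≥0∞) : EReal) = ⊤ := by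
      rw [EReal.coe_ennreal_top]
      exact EReal.coe_mul_top_of_pos (inv_pos.2 hl)
    rw [htop, EReal.sub_top]
    exact bot_le
  · have hJeq : ((jlam φ l ⇑(-u) : ℝ≥0∞) : EReal)
        = (((jlam φ l ⇑(-u)).toReal : ℝ) : EReal) := by
      conv_lhs => rw [← ENNReal.ofReal_toReal hJ]
      rw [EReal.coe_ennreal_ofReal, max_eq_left ENNReal.toReal_nonneg]
    have hfu : f y (-u) ≤ α + β * |y| + l⁻¹ * (jlam φ l ⇑(-u)).toReal := by
      have h := hgrow_ub y (-u)
      rw [hJeq] at h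
      exact_mod_cast h
    have hby : betat * |y| ≤ β * |y| := mul_le_mul_of_nonneg_right hββ (abs_nonneg y)
    have hreal : -(3 * α) - 3 * β * |y| - l⁻¹ * (jlam φ l ⇑(-u)).toReal ≤ A := by
      linarith
    rw [hJeq]
    exact_mod_cast hreal
end
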